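/- For any permutation π of {1,…,n} and any transposition τ, the number of transposition fragmentation breakpoints removed by τ is at most the number of fragmentations caused by τ: complete transpositions remove at most 1 fragmentation breakpoint, prefix and suffix transpositions remove at most 2, and all other transpositions remove at most 3. -/

import Mathlib

/-- Unsigned permutation of `{1,…,n}` (no extension): `p` maps `{1,…,n}`
bijectively onto `{1,…,n}`. -/
def IsPerm (n : ℕ) (p : ℕ → ℤ) : Prop :=
  (∀ i, 1 ≤ i → i ≤ n → 1 ≤ p i ∧ p i ≤ (n : ℤ)) ∧
  (∀ i j, 1 ≤ i → i ≤ n → 1 ≤ j → j ≤ n → p i = p j → i = j)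

/-- Number of transposition (= signed reversal) fragmentation breakpoints:
pairs `(p i, p (i+1))`, `1 ≤ i < n`, with `p (i+1) - p i ≠ 1` (no extension). -/
def fbT (n : ℕ) (p : ℕ → ℤ) : ℕ :=
  ((Finset.Ico 1 n).filter (fun i => p (i+1) - p i ≠ 1)).card

/-- The transposition τ(i,j,k): the result is
`(p₁ … p_{i-1} p_j … p_{k-1} p_i … p_{j-1} p_k … p_n)`. -/
def applyT (p : ℕ → ℤ) (i j k : ℕ) : ℕ → ℤ := fun l =>
  if l < i ∨ k ≤ l then p l
  else if l < i + (k - j) then p (l + (j - i))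
  else p (l - (k - j))

theorem stmt14 (n : ℕ) (p : ℕ → ℤ) (hp : IsPerm n p)
    (i j k : ℕ) (hi : 1 ≤ i) (hij : i < j) (hjk : j < k) (hk : k ≤ n + 1) :
    (fbT n p : ℤ) - (fbT n (applyT p i j k) : ℤ) ≤
      (if 1 < i then 1 else 0) + 1 + (if k < n + 1 then 1 else 0) := by
  set q := applyT p i j k with hqdef
  have fix : ∀ l, l < i ∨ k ≤ l → q l = p l := by
    intro l h
    simp only [hqdef, applyT, if_pos h]
  have blockA : ∀ l, i ≤ l → l < j → q (l + (k - j)) = p l := by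
    intro l h1 h2
    simp only [hqdef, applyT]
    rw [if_neg (by omega), if_neg (by omega)]
    congr 1; omega
  have blockB : ∀ l, j ≤ l → l < k → q (l - (j - i)) = p l := by
    intro l h1 h2
    simp only [hqdef, applyT]
    rw [if_neg (by omega), if_pos (by omega)]
    congr 1; omega
  set S := (Finset.Ico 1 n).filter (fun l => p (l+1) - p l ≠ 1) with hS
  set T := (Finset.Ico 1 n).filter (fun l => q (l+1) - q l ≠ 1) with hT
  set B : Finset ℕ := {i-1, j-1, k-1} with hBdef
  have key : (S \ B).card ≤ T.card := by
    apply Finset.card_le_card_of_injOn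
      (fun l => if l < i then l else if l < j then l + (k-j) else
        if l < k then l - (j-i) else l)
    · intro l hl
      obtain ⟨hl1, hl2⟩ := Finset.mem_sdiff.mp hl
      obtain ⟨hmem, hbp⟩ := Finset.mem_filter.mp hl1
      rw [Finset.mem_Ico] at hmem
      have hne : l ≠ i - 1 ∧ l ≠ j - 1 ∧ l ≠ k - 1 := by
        simp only [hBdef, Finset.mem_insert, Finset.mem_singleton] at hl2
        tauto
      rw [hT, Finset.mem_coe, Finset.mem_filter, Finset.mem_Ico]
      beta_reduce
      split_ifs with c1 c2 c3
      · refine ⟨⟨hmem.1, hmem.2⟩, ?_⟩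
        rw [fix l (Or.inl c1), fix (l+1) (Or.inl (by omega))]; exact hbp
      · refine ⟨⟨by omega, by omega⟩, ?_⟩
        have e1 := blockA l (by omega) c2
        have e2 := blockA (l+1) (by omega) (by omega)
        have e3 : l + (k - j) + 1 = l + 1 + (k - j) := by omega
        rw [e3, e1, e2]; exact hbp
      · refine ⟨⟨by omega, by omega⟩, ?_⟩
        have e1 := blockB l (by omega) c3
        have e2 := blockB (l+1) (by omega) (by omega)
        have e3 : l - (j - i) + 1 = l + 1 - (j - i) := by omega
        rw [e3, e1, e2]; exact hbp
      · refine ⟨⟨hmem.1, hmem.2⟩, ?_⟩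
        rw [fix l (Or.inr (by omega)), fix (l+1) (Or.inr (by omega))]; exact hbp
    · intro l1 h1 l2 h2 heq
      obtain ⟨h11, h12⟩ := Finset.mem_sdiff.mp h1
      obtain ⟨h21, h22⟩ := Finset.mem_sdiff.mp h2
      have hm1 := Finset.mem_Ico.mp (Finset.mem_filter.mp h11).1
      have hm2 := Finset.mem_Ico.mp (Finset.mem_filter.mp h21).1
      have hn1 : l1 ≠ i - 1 ∧ l1 ≠ j - 1 ∧ l1 ≠ k - 1 := by
        simp only [hBdef, Finset.mem_insert, Finset.mem_singleton] at h12
        tauto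
      have hn2 : l2 ≠ i - 1 ∧ l2 ≠ j - 1 ∧ l2 ≠ k - 1 := by
        simp only [hBdef, Finset.mem_insert, Finset.mem_singleton] at h22
        tauto

      dsimp only at heq
      split_ifs at heq <;> omega
  have hsplit : S.card ≤ (S \ B).card + (S ∩ B).card := by
    have := Finset.card_sdiff_add_card_inter S B
    omega
  have hBc : (S ∩ B).card ≤
      (if 1 < i then 1 else 0) + 1 + (if k < n + 1 then 1 else 0) := by
    have hmem : ∀ x ∈ S ∩ B, 1 ≤ x ∧ x < n ∧ (x = i-1 ∨ x = j-1 ∨ x = k-1) := by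
      intro x hx
      obtain ⟨hx1, hx2⟩ := Finset.mem_inter.mp hx
      have h1 := Finset.mem_Ico.mp (Finset.mem_filter.mp hx1).1
      simp only [hBdef, Finset.mem_insert, Finset.mem_singleton] at hx2
      exact ⟨h1.1, h1.2, hx2⟩
    split_ifs with c1 c2
    · calc (S ∩ B).card ≤ B.card := Finset.card_le_card Finset.inter_subset_right
        _ ≤ 3 := by
          rw [hBdef]
          exact (Finset.card_insert_le _ _).trans
            (Nat.succ_le_succ ((Finset.card_insert_le _ _).trans (by simp)))
    · have hsub : S ∩ B ⊆ {i-1, j-1} := by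
        intro x hx
        obtain ⟨hx1, hx2, hx3⟩ := hmem x hx
        simp only [Finset.mem_insert, Finset.mem_singleton]
        omega
      calc (S ∩ B).card ≤ ({i-1, j-1} : Finset ℕ).card := Finset.card_le_card hsub
        _ ≤ 2 := (Finset.card_insert_le _ _).trans (by simp)
    · have hsub : S ∩ B ⊆ {j-1, k-1} := by
        intro x hx
        obtain ⟨hx1, hx2, hx3⟩ := hmem x hx
        simp only [Finset.mem_insert, Finset.mem_singleton]
        omega
      calc (S ∩ B).card ≤ ({j-1, k-1} : Finset ℕ).card := Finset.card_le_card hsub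
        _ ≤ 2 := (Finset.card_insert_le _ _).trans (by simp)
    · have hsub : S ∩ B ⊆ {j-1} := by
        intro x hx
        obtain ⟨hx1, hx2, hx3⟩ := hmem x hx
        simp only [Finset.mem_singleton]
        omega
      calc (S ∩ B).card ≤ ({j-1} : Finset ℕ).card := Finset.card_le_card hsub
        _ ≤ 1 := by simp
  have eS : fbT n p = S.card := rfl
  have eT : fbT n q = T.card := rfl
  rw [eS, eT]
  split_ifs at hBc ⊢ <;> push_cast <;> omega
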